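/- For the degree-3 genus-1 BPS number of the quintic threefold X_5 ⊂ P⁴: the formula of Corollary 'bcov_crl' with a = (5), n = 5 yields a power series whose BPS transform has degree-3 coefficient 609250. More precisely, with I_0(q) = Σ_d q^d (5d)!/(d!)^5, J(q) = I_0(q)^{−1} Σ_{d≥1} q^d ((5d)!/(d!)^5)(Σ_{r=d+1}^{5d} 5/r), Q = q e^{J(q)}, and I_1 = 1 + D J where D = q d/dq, the series G(Q) := [−2 + (5/72)(5 − 125)]·log I_0 + (5/48)(25 − 5)·J + log(I_1^{−1/2}(1 − 5⁵q)^{−1/12}), expanded in Q, has genus-1 BPS degree-3 coefficient (after the standard genus-0/genus-1 BPS correction of Gopakumar–Vafa in degree 3) equal to 609250. -/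

import Mathlib

open PowerSeries

noncomputable section

/-- `I_0(q) = Σ_d q^d (5d)!/(d!)^5` for the quintic threefold. -/
def I0q : PowerSeries ℚ :=
  PowerSeries.mk fun d => ((5 * d).factorial : ℚ) / ((d.factorial : ℚ)) ^ 5

/-- `J(q) = I_0(q)^{−1} Σ_{d≥1} q^d ((5d)!/(d!)^5)(Σ_{r=d+1}^{5d} 5/r)`. -/
def Jq : PowerSeries ℚ :=
  I0q⁻¹ *
    PowerSeries.mk fun d =>
      if d = 0 then 0
      else ((5 * d).factorial : ℚ) / ((d.factorial : ℚ)) ^ 5 *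
        ∑ r ∈ Finset.Icc (d + 1) (5 * d), 5 / (r : ℚ)

/-- `D = q d/dq`. -/
def Dq (F : PowerSeries ℚ) : PowerSeries ℚ :=
  PowerSeries.mk fun d => (d : ℚ) * PowerSeries.coeff d F

/-- `I_1 = 1 + D J`. -/
def I1q : PowerSeries ℚ := 1 + Dq Jq

/-- formal exponential of a power series with zero constant term. -/
def expPS (G : PowerSeries ℚ) : PowerSeries ℚ :=
  PowerSeries.mk fun d =>
    ∑ j ∈ Finset.range (d + 1), PowerSeries.coeff d (G ^ j) / (j.factorial : ℚ)

/-- the mirror map `Q = q e^{J(q)}`, as a power series in `q`. -/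
def Qser : PowerSeries ℚ := PowerSeries.X * expPS Jq

/-- formal logarithm of a power series with constant term `1`. -/
def logPS (F : PowerSeries ℚ) : PowerSeries ℚ :=
  PowerSeries.mk fun d =>
    if d = 0 then 0
    else ∑ m ∈ Finset.Icc 1 d,
      ((-1 : ℚ) ^ (m + 1) / (m : ℚ)) * PowerSeries.coeff d ((F - 1) ^ m)

/-- the genus-1 mirror-symmetry series of the quintic threefold (Corollary `bcov_crl` with
`n = 5`, `a = (5)`):
`G = [−2 + (5/72)(5 − 125)]·log I₀ + (5/48)(25 − 5)·J + log(I₁^{−1/2}(1 − 5⁵q)^{−1/12})`. -/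
def Gq : PowerSeries ℚ :=
  PowerSeries.C (-2 + (5 / 72) * (5 - 125)) * logPS I0q +
    PowerSeries.C ((5 / 48) * (25 - 5)) * Jq +
    PowerSeries.C (-(1 / 2)) * logPS I1q +
    PowerSeries.C (-(1 / 12)) * logPS (1 - PowerSeries.C ((5 : ℚ) ^ 5) * PowerSeries.X)

end


section Aux
open PowerSeries Finset

/-- numerator series of `J`. -/
noncomputable def Bq : PowerSeries ℚ :=
  PowerSeries.mk fun d =>
    if d = 0 then 0
    else ((5 * d).factorial : ℚ) / ((d.factorial : ℚ)) ^ 5 *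
      ∑ r ∈ Finset.Icc (d + 1) (5 * d), 5 / (r : ℚ)


private lemma fact0 : Nat.factorial 0 = 1 := rfl
private lemma fact1 : Nat.factorial 1 = 1 := rfl
private lemma fact2 : Nat.factorial 2 = 2 := rfl
private lemma fact3 : Nat.factorial 3 = 6 := rfl
private lemma fact5 : Nat.factorial 5 = 120 := by decide
private lemma fact10 : Nat.factorial 10 = 3628800 := by decide
private lemma fact15 : Nat.factorial 15 = 1307674368000 := by decide

private lemma cmul (A B : PowerSeries ℚ) (n : ℕ) :
    coeff n (A * B) = ∑ i ∈ range (n + 1), coeff i A * coeff (n - i) B := by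
  rw [PowerSeries.coeff_mul, Finset.Nat.sum_antidiagonal_eq_sum_range_succ_mk]

private lemma pow_c (A : PowerSeries ℚ) (a1 a2 a3 : ℚ)
    (h0 : coeff 0 A = 0) (h1 : coeff 1 A = a1) (h2 : coeff 2 A = a2)
    (h3 : coeff 3 A = a3) :
    (coeff 0 (A ^ 2) = 0 ∧ coeff 1 (A ^ 2) = 0 ∧ coeff 2 (A ^ 2) = a1 ^ 2 ∧
      coeff 3 (A ^ 2) = 2 * a1 * a2) ∧
    (coeff 0 (A ^ 3) = 0 ∧ coeff 1 (A ^ 3) = 0 ∧ coeff 2 (A ^ 3) = 0 ∧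
      coeff 3 (A ^ 3) = a1 ^ 3) ∧
    coeff 3 (A ^ 4) = 0 := by
  have e2 : A ^ 2 = A * A := sq A
  have p0 : coeff 0 (A ^ 2) = 0 := by
    rw [e2, cmul]; simp [Finset.sum_range_succ, h0]
  have p1 : coeff 1 (A ^ 2) = 0 := by
    rw [e2, cmul]; simp [Finset.sum_range_succ, h0, h1]
  have p2 : coeff 2 (A ^ 2) = a1 ^ 2 := by
    rw [e2, cmul]; simp [Finset.sum_range_succ, h0, h1, h2]; ring
  have p3 : coeff 3 (A ^ 2) = 2 * a1 * a2 := by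
    rw [e2, cmul]; simp [Finset.sum_range_succ, h0, h1, h2, h3]; ring
  have e3 : A ^ 3 = A ^ 2 * A := pow_succ A 2
  have c0 : coeff 0 (A ^ 3) = 0 := by
    rw [e3, cmul]; simp [Finset.sum_range_succ, p0, h0]
  have c1 : coeff 1 (A ^ 3) = 0 := by
    rw [e3, cmul]; simp [Finset.sum_range_succ, p0, p1, h0, h1]
  have c2 : coeff 2 (A ^ 3) = 0 := by
    rw [e3, cmul]; simp [Finset.sum_range_succ, p0, p1, p2, h0, h1, h2]
  have c3 : coeff 3 (A ^ 3) = a1 ^ 3 := by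
    rw [e3, cmul]; simp [Finset.sum_range_succ, p0, p1, p2, p3, h0, h1, h2, h3]; ring
  have e4 : A ^ 4 = A ^ 3 * A := pow_succ A 3
  have d3 : coeff 3 (A ^ 4) = 0 := by
    rw [e4, cmul]; simp [Finset.sum_range_succ, c0, c1, c2, c3, h0, h1, h2, h3]
  exact ⟨⟨p0, p1, p2, p3⟩, ⟨c0, c1, c2, c3⟩, d3⟩

private lemma log_c (F : PowerSeries ℚ) (a1 a2 a3 : ℚ)
    (h0 : coeff 0 (F - 1) = 0) (h1 : coeff 1 (F - 1) = a1)
    (h2 : coeff 2 (F - 1) = a2) (h3 : coeff 3 (F - 1) = a3) :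
    coeff 0 (logPS F) = 0 ∧ coeff 1 (logPS F) = a1 ∧
    coeff 2 (logPS F) = a2 - a1 ^ 2 / 2 ∧
    coeff 3 (logPS F) = a3 - a1 * a2 + a1 ^ 3 / 3 := by
  obtain ⟨⟨_, _, p2, p3⟩, ⟨_, _, _, c3⟩, _⟩ := pow_c (F - 1) a1 a2 a3 h0 h1 h2 h3
  refine ⟨?_, ?_, ?_, ?_⟩
  · rw [logPS, coeff_mk]; simp
  · rw [logPS, coeff_mk]
    rw [show (Finset.Icc 1 1 : Finset ℕ) = {1} from by decide, Finset.sum_singleton]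
    simp [h1]
  · rw [logPS, coeff_mk]
    rw [show (Finset.Icc 1 2 : Finset ℕ) = {1, 2} from by decide,
      Finset.sum_insert (by decide), Finset.sum_singleton]
    simp [h2, p2]; ring
  · rw [logPS, coeff_mk]
    rw [show (Finset.Icc 1 3 : Finset ℕ) = {1, 2, 3} from by decide,
      Finset.sum_insert (by decide), Finset.sum_insert (by decide), Finset.sum_singleton]
    simp [h3, p3, c3]; ring

private lemma exp_c (G : PowerSeries ℚ) (g1 g2 g3 : ℚ)
    (h0 : coeff 0 G = 0) (h1 : coeff 1 G = g1) (h2 : coeff 2 G = g2)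
    (h3 : coeff 3 G = g3) :
    coeff 0 (expPS G) = 1 ∧ coeff 1 (expPS G) = g1 ∧
    coeff 2 (expPS G) = g2 + g1 ^ 2 / 2 ∧
    coeff 3 (expPS G) = g3 + g1 * g2 + g1 ^ 3 / 6 := by
  obtain ⟨⟨_, _, p2, p3⟩, ⟨_, _, _, c3⟩, q3⟩ := pow_c G g1 g2 g3 h0 h1 h2 h3
  refine ⟨?_, ?_, ?_, ?_⟩
  · rw [expPS, coeff_mk]
    simp [Finset.sum_range_succ, PowerSeries.coeff_one]
  · rw [expPS, coeff_mk]
    simp [Finset.sum_range_succ, PowerSeries.coeff_one, h1, fact0, fact1, fact2, fact3]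
  · rw [expPS, coeff_mk]
    simp [Finset.sum_range_succ, PowerSeries.coeff_one, h2, p2, fact0, fact1, fact2, fact3]
    try ring
  · rw [expPS, coeff_mk]
    simp [Finset.sum_range_succ, PowerSeries.coeff_one, h3, p3, c3, q3, fact0, fact1, fact2, fact3]
    try ring

end Aux

set_option maxHeartbeats 4000000 in
/-- If `N₁ d` are the coefficients of `G` expanded in the mirror
variable `Q = q e^{J(q)}`, and `n₁ d` are the genus-1 BPS numbers obtained from the `N₁ d`
and the genus-0 BPS numbers `n₀ d` of the quintic via the Gopakumar–Vafa formula
`N₁^d = Σ_{k|d} (n₀^{d/k}/12 + n₁^{d/k})/k`, with the standard genus-0 BPS inputs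
`n₀¹ = 2875` and `n₀³ = 317206375`, then `n₁³ = 609250`. -/
theorem quintic_genus1_BPS_degree3 (N1 n0 n1 : ℕ → ℚ)
    (hN : ∀ m : ℕ, PowerSeries.coeff m Gq
        = ∑ d ∈ Finset.range (m + 1), N1 d * PowerSeries.coeff m (Qser ^ d))
    (hGV : ∀ d : ℕ, 1 ≤ d →
        N1 d = ∑ k ∈ d.divisors, (n0 (d / k) / 12 + n1 (d / k)) / (k : ℚ))
    (hn01 : n0 1 = 2875) (hn03 : n0 3 = 317206375) :
    n1 3 = 609250 := by
  classical
  have FL : ∀ x : ℚ, x = x := fun x => rfl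
  -- coefficients of I0
  have i0 : PowerSeries.coeff 0 I0q = 1 := by
    rw [I0q, PowerSeries.coeff_mk]; norm_num [fact0]
  have i1 : PowerSeries.coeff 1 I0q = 120 := by
    rw [I0q, PowerSeries.coeff_mk]; norm_num [fact1, fact5]
  have i2 : PowerSeries.coeff 2 I0q = 113400 := by
    rw [I0q, PowerSeries.coeff_mk]; norm_num [fact2, fact10]
  have i3 : PowerSeries.coeff 3 I0q = 168168000 := by
    rw [I0q, PowerSeries.coeff_mk]; norm_num [fact3, fact15]
  -- coefficients of Bq
  have b0 : PowerSeries.coeff 0 Bq = 0 := by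
    rw [Bq, PowerSeries.coeff_mk]; norm_num
  have b1 : PowerSeries.coeff 1 Bq = 770 := by
    rw [Bq, PowerSeries.coeff_mk]
    rw [show (Finset.Icc 2 5 : Finset ℕ) = {2, 3, 4, 5} from by decide]
    norm_num [fact1, fact5]
  have b2 : PowerSeries.coeff 2 Bq = 810225 := by
    rw [Bq, PowerSeries.coeff_mk]
    rw [show (Finset.Icc 3 10 : Finset ℕ) = {3, 4, 5, 6, 7, 8, 9, 10} from by decide]
    norm_num [fact2, fact10]
  have b3 : PowerSeries.coeff 3 Bq = 3745679000 / 3 := by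
    rw [Bq, PowerSeries.coeff_mk]
    rw [show (Finset.Icc 4 15 : Finset ℕ) =
      {4, 5, 6, 7, 8, 9, 10, 11, 12, 13, 14, 15} from by decide]
    norm_num [fact3, fact15]
  -- Jq satisfies I0q * Jq = Bq
  have hc : PowerSeries.constantCoeff I0q ≠ 0 := by
    rw [I0q, PowerSeries.constantCoeff_mk]; norm_num [fact0]
  have Jq_eq : I0q * Jq = Bq := by
    rw [Jq, ← mul_assoc, PowerSeries.mul_inv_cancel _ hc, one_mul]; rfl
  -- coefficients of Jq
  have j0 : PowerSeries.coeff 0 Jq = 0 := by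
    have e := congrArg (PowerSeries.coeff 0) Jq_eq
    rw [cmul] at e
    norm_num only [Finset.sum_range_succ, Finset.sum_range_zero, i0, b0] at e
    linarith
  have j1 : PowerSeries.coeff 1 Jq = 770 := by
    have e := congrArg (PowerSeries.coeff 1) Jq_eq
    rw [cmul] at e
    norm_num only [Finset.sum_range_succ, Finset.sum_range_zero, i0, i1, j0, b1] at e
    linarith
  have j2 : PowerSeries.coeff 2 Jq = 717825 := by
    have e := congrArg (PowerSeries.coeff 2) Jq_eq
    rw [cmul] at e
    norm_num only [Finset.sum_range_succ, Finset.sum_range_zero, i0, i1, i2, j0, j1, b2] at e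
    linarith
  have j3 : PowerSeries.coeff 3 Jq = 3225308000 / 3 := by
    have e := congrArg (PowerSeries.coeff 3) Jq_eq
    rw [cmul] at e
    norm_num only [Finset.sum_range_succ, Finset.sum_range_zero,
      i0, i1, i2, i3, j0, j1, j2, b3] at e
    linarith
  -- coefficients of Dq Jq
  have d0 : PowerSeries.coeff 0 (Dq Jq) = 0 := by
    rw [Dq, PowerSeries.coeff_mk]; norm_num
  have d1 : PowerSeries.coeff 1 (Dq Jq) = 770 := by
    rw [Dq, PowerSeries.coeff_mk, j1]; norm_num
  have d2 : PowerSeries.coeff 2 (Dq Jq) = 1435650 := by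
    rw [Dq, PowerSeries.coeff_mk, j2]; norm_num
  have d3 : PowerSeries.coeff 3 (Dq Jq) = 3225308000 := by
    rw [Dq, PowerSeries.coeff_mk, j3]; norm_num
  -- log I0
  obtain ⟨l00, l01, l02, l03⟩ := log_c I0q 120 113400 168168000
    (by rw [map_sub, i0, PowerSeries.coeff_zero_one]; norm_num)
    (by rw [map_sub, i1]; norm_num [PowerSeries.coeff_one])
    (by rw [map_sub, i2]; norm_num [PowerSeries.coeff_one])
    (by rw [map_sub, i3]; norm_num [PowerSeries.coeff_one])
  -- log I1
  have hI1sub : I1q - 1 = Dq Jq := by rw [I1q]; ring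
  obtain ⟨l10, l11, l12, l13⟩ := log_c I1q 770 1435650 3225308000
    (by rw [hI1sub]; exact d0) (by rw [hI1sub]; exact d1)
    (by rw [hI1sub]; exact d2) (by rw [hI1sub]; exact d3)
  -- log (1 - 5^5 q)
  have hLsub : (1 - PowerSeries.C ((5 : ℚ) ^ 5) * PowerSeries.X) - 1
      = -(PowerSeries.C ((5 : ℚ) ^ 5) * PowerSeries.X) := by ring
  obtain ⟨l50, l51, l52, l53⟩ := log_c (1 - PowerSeries.C ((5 : ℚ) ^ 5) * PowerSeries.X)
    (-3125) 0 0
    (by rw [hLsub, map_neg, PowerSeries.coeff_C_mul, PowerSeries.coeff_X]; norm_num)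
    (by rw [hLsub, map_neg, PowerSeries.coeff_C_mul, PowerSeries.coeff_X]; norm_num)
    (by rw [hLsub, map_neg, PowerSeries.coeff_C_mul, PowerSeries.coeff_X]; norm_num)
    (by rw [hLsub, map_neg, PowerSeries.coeff_C_mul, PowerSeries.coeff_X]; norm_num)
  -- coefficients of Gq
  have gcoeff : ∀ n : ℕ, PowerSeries.coeff n Gq
      = (-2 + (5 / 72) * (5 - 125)) * PowerSeries.coeff n (logPS I0q)
        + ((5 / 48) * (25 - 5)) * PowerSeries.coeff n Jq
        + (-(1 / 2)) * PowerSeries.coeff n (logPS I1q)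
        + (-(1 / 12)) * PowerSeries.coeff n
            (logPS (1 - PowerSeries.C ((5 : ℚ) ^ 5) * PowerSeries.X)) := by
    intro n
    rw [Gq, map_add, map_add, map_add, PowerSeries.coeff_C_mul, PowerSeries.coeff_C_mul,
      PowerSeries.coeff_C_mul, PowerSeries.coeff_C_mul]
  have g0 : PowerSeries.coeff 0 Gq = 0 := by
    rw [gcoeff, l00, l10, l50, j0]; norm_num
  have g1 : PowerSeries.coeff 1 Gq = 2875 / 12 := by
    rw [gcoeff, l01, l11, l51, j1]; norm_num
  have g2 : PowerSeries.coeff 2 Gq = 5648875 / 24 := by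
    rw [gcoeff, l02, l12, l52, j2]; norm_num
  have g3 : PowerSeries.coeff 3 Gq = 12543053125 / 36 := by
    rw [gcoeff, l03, l13, l53, j3]; norm_num
  -- coefficients of Qser
  obtain ⟨e0, e1, e2, e3⟩ := exp_c Jq 770 717825 (3225308000 / 3) j0 j1 j2 j3
  have q0 : PowerSeries.coeff 0 Qser = 0 := by
    rw [Qser, cmul]
    norm_num only [Finset.sum_range_succ, Finset.sum_range_zero, PowerSeries.coeff_X, e0]
    simp
  have q1 : PowerSeries.coeff 1 Qser = 1 := by
    rw [Qser, cmul]
    norm_num only [Finset.sum_range_succ, Finset.sum_range_zero, PowerSeries.coeff_X, e0, e1]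
    simp
  have q2 : PowerSeries.coeff 2 Qser = 770 := by
    rw [Qser, cmul]
    norm_num only [Finset.sum_range_succ, Finset.sum_range_zero, PowerSeries.coeff_X,
      e0, e1, e2]
    simp
  have q3 : PowerSeries.coeff 3 Qser = 1014275 := by
    rw [Qser, cmul]
    norm_num only [Finset.sum_range_succ, Finset.sum_range_zero, PowerSeries.coeff_X,
      e0, e1, e2, e3]
    norm_num
  -- coefficients of Qser ^ 2 and Qser ^ 3
  obtain ⟨⟨s0, s1, s2, s3⟩, ⟨t0, t1, t2, t3⟩, -⟩ := pow_c Qser 1 770 1014275 q0 q1 q2 q3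
  -- extract the N1 values from hN
  have hN0 := hN 0
  rw [g0] at hN0
  norm_num only [Finset.sum_range_succ, Finset.sum_range_zero, pow_zero,
    PowerSeries.coeff_zero_one, reduceIte] at hN0
  try norm_num at hN0
  have hN1 := hN 1
  rw [g1] at hN1
  norm_num only [Finset.sum_range_succ, Finset.sum_range_zero, pow_zero, pow_one,
    PowerSeries.coeff_one, reduceIte, q1] at hN1
  try norm_num at hN1
  have hN2 := hN 2
  rw [g2] at hN2
  norm_num only [Finset.sum_range_succ, Finset.sum_range_zero, pow_zero, pow_one,
    PowerSeries.coeff_one, reduceIte, q2, s2] at hN2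
  try norm_num at hN2
  have hN3 := hN 3
  rw [g3] at hN3
  norm_num only [Finset.sum_range_succ, Finset.sum_range_zero, pow_zero, pow_one,
    PowerSeries.coeff_one, reduceIte, q3, s3, t3] at hN3
  try norm_num at hN3
  -- Gopakumar–Vafa relations
  have hv1 := hGV 1 le_rfl
  rw [show Nat.divisors 1 = {1} from by decide, Finset.sum_singleton] at hv1
  norm_num [hn01] at hv1
  have hv3 := hGV 3 (by norm_num)
  rw [show Nat.divisors 3 = {1, 3} from by decide,
    Finset.sum_insert (by decide), Finset.sum_singleton] at hv3
  norm_num [hn01, hn03] at hv3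
  linarith
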